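/- Let Θ ⊆ ℝ be bounded with M := sup_{θ∈Θ}|θ-θ₀|, g₀ a probability measure on Θ with at most J support points, g any probability measure on Θ, and Δ := max_{1≤j≤2J}|m_{j,g} - m_{j,g₀}| where m_{k,ν} := ∫(θ-θ₀)^k dν(θ). Then for every integer k > 2J, |m_{k,g} - m_{k,g₀}| ≤ (k-2J)·(M+1)^{2J(k-2J)+1}·Δ. -/

import Mathlib

open Polynomial Finset MeasureTheory

lemma l1_mul_X_sub_C (a : ℝ) (q : ℝ[X]) (n : ℕ) (hq : q.natDegree ≤ n) :
    ∑ i ∈ range (n+2), |((X - C a) * q).coeff i| ≤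
      (1+|a|) * ∑ i ∈ range (n+1), |q.coeff i| := by
  have hco : ∀ i, ((X - C a) * q).coeff i = (X * q).coeff i - a * q.coeff i := by
    intro i; rw [sub_mul, coeff_sub, coeff_C_mul]
  have h1 : ∑ i ∈ range (n+2), |(X * q).coeff i| = ∑ i ∈ range (n+1), |q.coeff i| := by
    rw [show n+2 = n+1+1 from rfl, Finset.sum_range_succ']
    simp [coeff_X_mul, coeff_mul_X_zero]
  have h2 : ∑ i ∈ range (n+2), |q.coeff i| = ∑ i ∈ range (n+1), |q.coeff i| := by
    rw [show n+2 = n+1+1 from rfl, Finset.sum_range_succ]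
    have : q.coeff (n+1) = 0 := coeff_eq_zero_of_natDegree_lt (by omega)
    simp [this]
  calc ∑ i ∈ range (n+2), |((X - C a) * q).coeff i|
      ≤ ∑ i ∈ range (n+2), (|(X * q).coeff i| + |a| * |q.coeff i|) := by
        apply Finset.sum_le_sum; intro i _
        rw [hco i]
        calc |(X * q).coeff i - a * q.coeff i| ≤ |(X * q).coeff i| + |a * q.coeff i| :=
              abs_sub _ _
          _ = |(X * q).coeff i| + |a| * |q.coeff i| := by rw [abs_mul]
    _ = ∑ i ∈ range (n+1), |q.coeff i| + |a| * ∑ i ∈ range (n+1), |q.coeff i| := by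
        rw [Finset.sum_add_distrib, h1, ← Finset.mul_sum, h2]
    _ = (1+|a|) * ∑ i ∈ range (n+1), |q.coeff i| := by ring

lemma l1_prod (T : Multiset ℝ) :
    ∑ i ∈ range (Multiset.card T + 1), |((T.map (fun a => X - C a)).prod).coeff i|
      ≤ (T.map (fun a => 1 + |a|)).prod := by
  induction T using Multiset.induction_on with
  | empty => simp
  | cons a T ih =>
    rw [Multiset.map_cons, Multiset.prod_cons, Multiset.map_cons, Multiset.prod_cons,
      Multiset.card_cons]
    have hq : ((T.map (fun a => X - C a)).prod).natDegree ≤ Multiset.card T := by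
      rw [natDegree_multiset_prod_X_sub_C_eq_card]
    calc ∑ i ∈ range (Multiset.card T + 1 + 1),
          |((X - C a) * (T.map (fun a => X - C a)).prod).coeff i|
        ≤ (1+|a|) * ∑ i ∈ range (Multiset.card T + 1),
            |((T.map (fun a => X - C a)).prod).coeff i| := l1_mul_X_sub_C _ _ _ hq
      _ ≤ (1+|a|) * (T.map (fun a => 1 + |a|)).prod := by
          apply mul_le_mul_of_nonneg_left ih (by positivity)

lemma prod_le_pow_of_le (L : ℝ) (hL : 0 ≤ L) (T : Multiset ℝ)
    (h : ∀ a ∈ T, 0 ≤ a ∧ a ≤ L) : T.prod ≤ L ^ Multiset.card T := by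
  induction T using Multiset.induction_on with
  | empty => simp
  | cons a T ih =>
    rw [Multiset.prod_cons, Multiset.card_cons, pow_succ']
    have ha := h a (Multiset.mem_cons_self a T)
    have hT : T.prod ≤ L ^ Multiset.card T := ih (fun b hb => h b (Multiset.mem_cons_of_mem hb))
    have hTnn : 0 ≤ T.prod := Multiset.prod_nonneg (fun b hb => (h b (Multiset.mem_cons_of_mem hb)).1)
    calc a * T.prod ≤ L * T.prod := mul_le_mul_of_nonneg_right ha.2 hTnn
      _ ≤ L * L ^ Multiset.card T := mul_le_mul_of_nonneg_left hT hL

theorem moment_comparison_sharp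
    (Θ : Set ℝ) (θ₀ M : ℝ) (hθ₀ : θ₀ ∈ Θ)
    (hM : IsLUB ((fun θ => |θ - θ₀|) '' Θ) M)
    (J : ℕ) (hJ : 1 ≤ J)
    (g g₀ : Measure ℝ) [IsProbabilityMeasure g] [IsProbabilityMeasure g₀]
    (hgΘ : g Θᶜ = 0) (hg₀Θ : g₀ Θᶜ = 0)
    (S : Finset ℝ) (hScard : S.card ≤ J) (hS : g₀ (↑S : Set ℝ)ᶜ = 0)
    (m : ℕ → Measure ℝ → ℝ)
    (hm : ∀ k ν, m k ν = ∫ θ, (θ - θ₀) ^ k ∂ν)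
    (Δ : ℝ) (hne : (Finset.Icc 1 (2 * J)).Nonempty)
    (hΔ : Δ = (Finset.Icc 1 (2 * J)).sup' hne (fun j => |m j g - m j g₀|))
    (k : ℕ) (hk : 2 * J < k) :
    |m k g - m k g₀| ≤ ((k - 2 * J : ℕ) : ℝ) * (M + 1) ^ (2 * J * (k - 2 * J) + 1) * Δ := by
  classical
  -- basic bounds
  have hMθ : ∀ θ ∈ Θ, |θ - θ₀| ≤ M := fun θ h => hM.1 ⟨θ, h, rfl⟩
  have hM0 : 0 ≤ M := by
    have := hMθ θ₀ hθ₀; simpa using this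
  set L : ℝ := M + 1 with hLdef
  have hL1 : (1:ℝ) ≤ L := by simp [hLdef]; linarith
  have hL0 : (0:ℝ) ≤ L := by linarith
  -- shrink S to Θ
  set S' : Finset ℝ := S.filter (fun s => s ∈ Θ) with hS'def
  have hS' : g₀ (↑S' : Set ℝ)ᶜ = 0 := by
    apply measure_mono_null (t := (↑S : Set ℝ)ᶜ ∪ Θᶜ) ?_ (measure_union_null hS hg₀Θ)
    intro θ hθ
    by_cases h1 : θ ∈ S
    · by_cases h2 : θ ∈ Θ
      · exact absurd (Finset.mem_coe.2 (Finset.mem_filter.2 ⟨h1, h2⟩)) hθ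
      · exact Or.inr h2
    · exact Or.inl (by simpa using h1)
  have hS'card : S'.card ≤ J := le_trans (Finset.card_filter_le _ _) hScard
  set r : ℕ := S'.card with hrdef
  -- the polynomial
  set T : Multiset ℝ :=
    Multiset.replicate (2*(J - r)) 0 + (S'.val.map (fun s => s - θ₀) + S'.val.map (fun s => s - θ₀))
    with hTdef
  have hTcard : Multiset.card T = 2*J := by
    simp [hTdef, Multiset.card_replicate]
    omega
  set p : ℝ[X] := (T.map (fun a => X - C a)).prod with hpdef
  have hdeg : p.natDegree = 2*J := by
    rw [hpdef, natDegree_multiset_prod_X_sub_C_eq_card, hTcard]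
  have hmonic : p.Monic :=
    monic_multiset_prod_of_monic _ _ (fun a _ => monic_X_sub_C a)
  have hcoefftop : p.coeff (2*J) = 1 := by
    rw [← hdeg]; exact hmonic.coeff_natDegree
  have hl1 : ∑ i ∈ range (2*J+1), |p.coeff i| ≤ L ^ (2*J) := by
    have h1 := l1_prod T
    rw [hTcard] at h1
    refine h1.trans ?_
    have : ∀ b ∈ T.map (fun a => 1 + |a|), 0 ≤ b ∧ b ≤ L := by
      intro b hb
      obtain ⟨a, ha, rfl⟩ := Multiset.mem_map.1 hb
      constructor
      · positivity
      · have haM : |a| ≤ M := by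
          rw [hTdef] at ha
          rcases Multiset.mem_add.1 ha with h | h
          · rw [Multiset.eq_of_mem_replicate h]; simpa using hM0
          · have : ∃ s ∈ S', a = s - θ₀ := by
              rcases Multiset.mem_add.1 h with h | h <;>
              · obtain ⟨s, hs, rfl⟩ := Multiset.mem_map.1 h
                exact ⟨s, hs, rfl⟩
            obtain ⟨s, hs, rfl⟩ := this
            exact hMθ s (Finset.mem_filter.1 hs).2
        simp [hLdef]; linarith
    have := prod_le_pow_of_le L hL0 _ this
    simpa [hTcard] using this
  have hsumlow : ∑ i ∈ range (2*J), |p.coeff i| ≤ L ^ (2*J) - 1 := by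
    have := hl1
    rw [Finset.sum_range_succ, hcoefftop] at this
    simp at this
    linarith
  -- eval facts
  have heval : ∀ x : ℝ, p.eval x = (T.map (fun a => x - a)).prod := by
    intro x
    rw [hpdef, eval_multiset_prod, Multiset.map_map]
    congr 1
    apply Multiset.map_congr rfl
    intro a _
    simp
  have hp0 : ∀ θ ∈ S', p.eval (θ - θ₀) = 0 := by
    intro θ hθ
    rw [heval]
    apply Multiset.prod_eq_zero
    have haT : (θ - θ₀) ∈ T := by
      rw [hTdef]
      apply Multiset.mem_add.2 (Or.inr (Multiset.mem_add.2 (Or.inl _)))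
      exact Multiset.mem_map.2 ⟨θ, hθ, rfl⟩
    have : (0:ℝ) = (θ - θ₀) - (θ - θ₀) := by ring
    rw [this]
    exact Multiset.mem_map.2 ⟨θ - θ₀, haT, rfl⟩
  have hpnn : ∀ x : ℝ, 0 ≤ p.eval x := by
    intro x
    rw [heval, hTdef]
    rw [Multiset.map_add, Multiset.map_add, Multiset.prod_add, Multiset.prod_add]
    rw [Multiset.map_replicate, Multiset.prod_replicate]
    have : (0:ℝ) ≤ (x - 0) ^ (2*(J-r)) := by
      rw [show 2*(J-r) = 2*(J-r) from rfl, mul_comm 2 (J-r), pow_mul]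
      positivity
    exact mul_nonneg this (mul_self_nonneg _)
  
  -- a.e. facts
  have haeg : ∀ᵐ θ ∂g, |θ - θ₀| ≤ M := by
    have h : ∀ᵐ θ ∂g, θ ∈ Θ := by rw [ae_iff]; exact hgΘ
    filter_upwards [h] with θ hθ using hMθ θ hθ
  have haeg₀ : ∀ᵐ θ ∂g₀, |θ - θ₀| ≤ M := by
    have h : ∀ᵐ θ ∂g₀, θ ∈ Θ := by rw [ae_iff]; exact hg₀Θ
    filter_upwards [h] with θ hθ using hMθ θ hθ
  have haeS' : ∀ᵐ θ ∂g₀, θ ∈ S' := by rw [ae_iff]; exact hS'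
  -- integrability
  have hintpow : ∀ (ν : Measure ℝ), IsProbabilityMeasure ν → (∀ᵐ θ ∂ν, |θ - θ₀| ≤ M) →
      ∀ t : ℕ, Integrable (fun θ => (θ - θ₀)^t) ν := by
    intro ν hν hae t
    haveI := hν
    apply Integrable.mono' (integrable_const (M^t))
    · exact ((continuous_id.sub continuous_const).pow t).aestronglyMeasurable
    · filter_upwards [hae] with θ hθ
      rw [Real.norm_eq_abs, abs_pow]
      exact pow_le_pow_left₀ (abs_nonneg _) hθ t
  have hF : ∀ (t : ℕ) (x : ℝ), p.eval x * x^t = ∑ i ∈ range (2*J+1), p.coeff i * x^(t+i) := by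
    intro t x
    have h := p.eval_eq_sum_range (x := x)
    rw [hdeg] at h
    rw [h, Finset.sum_mul]
    apply Finset.sum_congr rfl
    intro i _
    rw [pow_add]
    ring
  have hintF : ∀ (ν : Measure ℝ), IsProbabilityMeasure ν → (∀ᵐ θ ∂ν, |θ - θ₀| ≤ M) →
      ∀ t : ℕ, Integrable (fun θ => p.eval (θ - θ₀) * (θ - θ₀)^t) ν := by
    intro ν hν hae t
    have hfe : (fun θ => p.eval (θ - θ₀) * (θ - θ₀)^t)
        = fun θ => ∑ i ∈ range (2*J+1), p.coeff i * (θ - θ₀)^(t+i) :=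
      funext fun θ => hF t _
    rw [hfe]
    exact integrable_finset_sum _ (fun i _ => (hintpow ν hν hae (t+i)).const_mul _)
  have hexp : ∀ (ν : Measure ℝ), IsProbabilityMeasure ν → (∀ᵐ θ ∂ν, |θ - θ₀| ≤ M) →
      ∀ t : ℕ, ∫ θ, p.eval (θ - θ₀) * (θ - θ₀)^t ∂ν
        = ∑ i ∈ range (2*J+1), p.coeff i * m (t+i) ν := by
    intro ν hν hae t
    simp_rw [hF]
    rw [integral_finset_sum _ (fun i _ => (hintpow ν hν hae (t+i)).const_mul _)]
    apply Finset.sum_congr rfl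
    intro i _
    rw [integral_const_mul, hm]
  have hI₀ : ∀ t : ℕ, ∫ θ, p.eval (θ - θ₀) * (θ - θ₀)^t ∂g₀ = 0 := by
    intro t
    apply integral_eq_zero_of_ae
    filter_upwards [haeS'] with θ hθ
    simp [hp0 θ hθ]
  -- moment differences
  set e : ℕ → ℝ := fun j => m j g - m j g₀ with hedef
  have he0 : e 0 = 0 := by simp [hedef, hm]
  have hebase : ∀ j, j ≤ 2*J → |e j| ≤ Δ := by
    intro j hj
    rcases Nat.eq_zero_or_pos j with h | h
    · subst h
      rw [he0, abs_zero, hΔ]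
      obtain ⟨i, hi⟩ := hne
      exact le_trans (abs_nonneg (m i g - m i g₀))
        (Finset.le_sup' (fun j => |m j g - m j g₀|) hi)
    · rw [hΔ]
      simp only [hedef]
      exact Finset.le_sup' (fun j => |m j g - m j g₀|) (Finset.mem_Icc.2 ⟨h, hj⟩)
  have hΔ0 : 0 ≤ Δ := le_trans (abs_nonneg _) (hebase 0 (by omega))
  have hkey : ∀ t : ℕ, ∑ i ∈ range (2*J+1), p.coeff i * e (t+i)
      = ∫ θ, p.eval (θ - θ₀) * (θ - θ₀)^t ∂g := by
    intro t
    have h1 := hexp g ‹_› haeg t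
    have h2 := hexp g₀ ‹_› haeg₀ t
    rw [hI₀ t] at h2
    have h3 : ∑ i ∈ range (2*J+1), p.coeff i * e (t+i)
        = (∑ i ∈ range (2*J+1), p.coeff i * m (t+i) g)
          - ∑ i ∈ range (2*J+1), p.coeff i * m (t+i) g₀ := by
      rw [← Finset.sum_sub_distrib]
      apply Finset.sum_congr rfl
      intro i _
      rw [hedef]; ring
    rw [h3, ← h1, ← h2, sub_zero]
  have hI0 : ∫ θ, p.eval (θ - θ₀) * (θ - θ₀)^0 ∂g ≤ L^(2*J) * Δ := by
    rw [← hkey 0]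
    calc ∑ i ∈ range (2*J+1), p.coeff i * e (0+i)
        ≤ |∑ i ∈ range (2*J+1), p.coeff i * e (0+i)| := le_abs_self _
      _ ≤ ∑ i ∈ range (2*J+1), |p.coeff i * e (0+i)| := Finset.abs_sum_le_sum_abs _ _
      _ ≤ ∑ i ∈ range (2*J+1), |p.coeff i| * Δ := by
          apply Finset.sum_le_sum
          intro i hi
          rw [abs_mul]
          exact mul_le_mul_of_nonneg_left
            (hebase _ (by simpa using Nat.lt_succ_iff.1 (Finset.mem_range.1 hi)))
            (abs_nonneg _)
      _ = (∑ i ∈ range (2*J+1), |p.coeff i|) * Δ := (Finset.sum_mul _ _ _).symm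
      _ ≤ L^(2*J) * Δ := mul_le_mul_of_nonneg_right hl1 hΔ0
  have hIt : ∀ t : ℕ, |∫ θ, p.eval (θ - θ₀) * (θ - θ₀)^t ∂g| ≤ M^t * (L^(2*J) * Δ) := by
    intro t
    have h1 : |∫ θ, p.eval (θ - θ₀) * (θ - θ₀)^t ∂g|
        ≤ ∫ θ, |p.eval (θ - θ₀) * (θ - θ₀)^t| ∂g := by
      have := norm_integral_le_integral_norm (μ := g)
        (fun θ => p.eval (θ - θ₀) * (θ - θ₀)^t)
      simp only [Real.norm_eq_abs] at this
      exact this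
    have h2 : ∫ θ, |p.eval (θ - θ₀) * (θ - θ₀)^t| ∂g
        ≤ ∫ θ, M^t * (p.eval (θ - θ₀) * (θ - θ₀)^0) ∂g := by
      apply integral_mono_ae ((hintF g ‹_› haeg t).abs) ((hintF g ‹_› haeg 0).const_mul _)
      filter_upwards [haeg] with θ hθ
      rw [abs_mul, abs_of_nonneg (hpnn _), abs_pow, pow_zero, mul_one]
      rw [mul_comm (M^t)]
      exact mul_le_mul_of_nonneg_left (pow_le_pow_left₀ (abs_nonneg _) hθ t) (hpnn _)
    rw [integral_const_mul] at h2
    exact h1.trans (h2.trans (mul_le_mul_of_nonneg_left hI0 (pow_nonneg hM0 t)))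
  
  -- the constants
  set c : ℕ → ℝ := fun n => if n = 0 then 1 else (n : ℝ) * L^(2*J*n+1) with hcdef
  have hc0 : ∀ n, 0 ≤ c n := by
    intro n
    rw [hcdef]
    dsimp only
    split
    · norm_num
    · positivity
  have hcmono : ∀ n, c n ≤ c (n+1) := by
    intro n
    rw [hcdef]
    dsimp only
    rcases Nat.eq_zero_or_pos n with h | h
    · subst h
      simp only [if_pos rfl, if_neg (Nat.one_ne_zero)]
      have : (1:ℝ) ≤ L^(2*J*1+1) := one_le_pow₀ hL1
      simpa using this
    · rw [if_neg (by omega), if_neg (by omega)]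
      apply mul_le_mul
      · exact_mod_cast Nat.le_succ n
      · exact pow_le_pow_right₀ hL1 (by nlinarith)
      · positivity
      · positivity
  have hstep : ∀ n, M^(n+1) * L^(2*J) + (L^(2*J)-1) * c n ≤ c (n+1) := by
    intro n
    cases n with
    | zero =>
      rw [hcdef]
      dsimp only
      rw [if_pos rfl, if_neg (Nat.one_ne_zero)]
      have h1 : L^(2*J*1+1) = L^(2*J) * L := by
        rw [show 2*J*1+1 = 2*J+1 by ring, pow_succ]
      rw [h1]
      have h2 : (0:ℝ) ≤ L^(2*J) := by positivity
      rw [hLdef]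
      push_cast
      nlinarith
    | succ n =>
      rw [hcdef]
      dsimp only
      rw [if_neg (by omega), if_neg (by omega)]
      have hMn : M^(n+1+1) ≤ L^(n+1+1) := pow_le_pow_left₀ hM0 (by rw [hLdef]; linarith) _
      have h1 : M^(n+1+1) * L^(2*J) ≤ L^(2*J*(n+1+1)+1) := by
        calc M^(n+1+1) * L^(2*J) ≤ L^(n+1+1) * L^(2*J) :=
              mul_le_mul_of_nonneg_right hMn (by positivity)
          _ = L^(n+1+1+2*J) := (pow_add L _ _).symm
          _ ≤ L^(2*J*(n+1+1)+1) := by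
              apply pow_le_pow_right₀ hL1
              have h4 : 2*J*(n+1+1) = 2*J*n + 2*J + 2*J := by ring
              have h6 : 1*n ≤ 2*J*n := Nat.mul_le_mul_right _ (by omega)
              omega
      have h2 : (L^(2*J)-1) * (((n:ℝ)+1) * L^(2*J*(n+1)+1))
          ≤ ((n:ℝ)+1) * L^(2*J*(n+1+1)+1) := by
        have e1 : L^(2*J) * L^(2*J*(n+1)+1) = L^(2*J*(n+1+1)+1) := by
          rw [← pow_add]
          congr 1
          ring
        calc (L^(2*J)-1) * (((n:ℝ)+1) * L^(2*J*(n+1)+1))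
            ≤ L^(2*J) * (((n:ℝ)+1) * L^(2*J*(n+1)+1)) := by
              apply mul_le_mul_of_nonneg_right (by linarith) (by positivity)
          _ = ((n:ℝ)+1) * L^(2*J*(n+1+1)+1) := by rw [← e1]; ring
      push_cast
      nlinarith [h1, h2]
  -- the main induction
  have main : ∀ n, ∀ j, j ≤ 2*J + n → |e j| ≤ c n * Δ := by
    intro n
    induction n with
    | zero =>
      intro j hj
      have := hebase j (by omega)
      have hc : c 0 = 1 := by simp [hcdef]
      rw [hc, one_mul]
      exact this
    | succ n ih =>
      intro j hj
      by_cases hj' : j ≤ 2*J + n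
      · exact (ih j hj').trans (mul_le_mul_of_nonneg_right (hcmono n) hΔ0)
      · have hjeq : j = 2*J + (n+1) := by omega
        have hid : e j = (∫ θ, p.eval (θ - θ₀) * (θ - θ₀)^(n+1) ∂g)
            - ∑ i ∈ range (2*J), p.coeff i * e ((n+1)+i) := by
          have h := hkey (n+1)
          rw [Finset.sum_range_succ, hcoefftop, one_mul] at h
          have htj : (n+1) + 2*J = j := by omega
          rw [htj] at h
          linarith
        have hsum : |∑ i ∈ range (2*J), p.coeff i * e ((n+1)+i)|
            ≤ (L^(2*J)-1) * (c n * Δ) := by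
          calc |∑ i ∈ range (2*J), p.coeff i * e ((n+1)+i)|
              ≤ ∑ i ∈ range (2*J), |p.coeff i * e ((n+1)+i)| :=
                Finset.abs_sum_le_sum_abs _ _
            _ ≤ ∑ i ∈ range (2*J), |p.coeff i| * (c n * Δ) := by
                apply Finset.sum_le_sum
                intro i hi
                rw [abs_mul]
                apply mul_le_mul_of_nonneg_left _ (abs_nonneg _)
                apply ih
                have := Finset.mem_range.1 hi
                omega
            _ = (∑ i ∈ range (2*J), |p.coeff i|) * (c n * Δ) := (Finset.sum_mul _ _ _).symm
            _ ≤ (L^(2*J)-1) * (c n * Δ) :=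
                mul_le_mul_of_nonneg_right hsumlow (by positivity)
        calc |e j| ≤ |∫ θ, p.eval (θ - θ₀) * (θ - θ₀)^(n+1) ∂g|
              + |∑ i ∈ range (2*J), p.coeff i * e ((n+1)+i)| := by
              rw [hid]; exact abs_sub _ _
          _ ≤ M^(n+1) * (L^(2*J) * Δ) + (L^(2*J)-1) * (c n * Δ) :=
              add_le_add (hIt (n+1)) hsum
          _ ≤ c (n+1) * Δ := by
              have := mul_le_mul_of_nonneg_right (hstep n) hΔ0
              nlinarith [this]
  -- conclude
  have hfin := main (k - 2*J) k (by omega)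
  have hgoal : m k g - m k g₀ = e k := rfl
  rw [hgoal]
  have hc : c (k - 2*J) = ((k - 2*J : ℕ) : ℝ) * L^(2*J*(k - 2*J)+1) := by
    rw [hcdef]
    dsimp only
    rw [if_neg (by omega)]
  rw [hc] at hfin
  calc |e k| ≤ ((k - 2*J : ℕ) : ℝ) * L^(2*J*(k - 2*J)+1) * Δ := hfin
    _ = ((k - 2*J : ℕ) : ℝ) * (M+1)^(2*J*(k - 2*J)+1) * Δ := by rw [hLdef]
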